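/- arXiv:1810.01723 — 2 statements merged into one kernel-verified Lean document; each statement's English description precedes it below -/
import Mathlib

section
/- For every M ≥ 1, the partial sum S_M := ∑_{p=1}^{M} [(2p-3)!!]^2/(2p-1)! satisfies 1 ≤ S_M < π/2, so that the maximal CFL number ν_max^{2M} = 1/S_M satisfies 2/π < ν_max^{2M} ≤ 1. -/
open Nat Finset Real

/-- The partial sum `S_M = ∑_{p=1}^{M} [(2p-3)!!]²/(2p-1)!`, whose reciprocal
is the maximal CFL number `ν_max^{2M}` of the `(2,2M)` leap-frog FDTD scheme. -/
noncomputable def SsumFD (M : ℕ) : ℝ :=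
  ∑ p ∈ Finset.Icc 1 M, ((2 * p - 3)‼ : ℝ) ^ 2 / ((2 * p - 1)! : ℝ)

/-! ### Auxiliary definitions -/

/-- `wA n = (2n-1)‼ / (2n)‼`. -/
noncomputable def wA (n : ℕ) : ℝ := ((2 * n - 1)‼ : ℝ) / ((2 * n)‼ : ℝ)

lemma wA_zero : wA 0 = 1 := by simp [wA]

lemma wA_pos (n : ℕ) : 0 < wA n := by
  apply _root_.div_pos <;> exact_mod_cast Nat.doubleFactorial_pos _

lemma doubleFactorial_two_mul_add_one (n : ℕ) :
    (2 * n + 1)‼ = (2 * n + 1) * (2 * n - 1)‼ := by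
  cases n with
  | zero => rfl
  | succ m =>
      have h1 : 2 * (m + 1) + 1 = (2 * m + 1) + 2 := by ring
      have h2 : 2 * (m + 1) - 1 = 2 * m + 1 := by omega
      rw [h1, h2, Nat.doubleFactorial_add_two]

lemma wA_rec (n : ℕ) : (2 * (n : ℝ) + 2) * wA (n + 1) = (2 * (n : ℝ) + 1) * wA n := by
  have h1 : 2 * (n + 1) - 1 = 2 * n + 1 := by omega
  have h2 : 2 * (n + 1) = (2 * n) + 2 := by ring
  have hd1 : ((2 * n)‼ : ℝ) ≠ 0 := by exact_mod_cast (Nat.doubleFactorial_pos _).ne'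
  have hd2 : ((2 * (n + 1))‼ : ℝ) ≠ 0 := by exact_mod_cast (Nat.doubleFactorial_pos _).ne'
  rw [wA, wA, h1, doubleFactorial_two_mul_add_one]
  rw [h2, Nat.doubleFactorial_add_two] at hd2 ⊢
  have hcast : (((2 * n + 2) * (2 * n)‼ : ℕ) : ℝ) = (2 * (n : ℝ) + 2) * ((2 * n)‼ : ℝ) := by
    push_cast; ring
  rw [hcast]
  have hcast2 : (((2 * n + 1) * (2 * n - 1)‼ : ℕ) : ℝ)
      = (2 * (n : ℝ) + 1) * (((2 * n - 1)‼ : ℕ) : ℝ) := by push_cast; ring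
  rw [hcast2]
  have h22 : (2 * (n : ℝ) + 2) ≠ 0 := by positivity
  field_simp

/-- partial sums of the binomial series of `(1-t)^{-1/2}`. -/
noncomputable def wP (M : ℕ) (t : ℝ) : ℝ := ∑ n ∈ Finset.range M, wA n * t ^ n

/-- derivative of `wP M`. -/
noncomputable def wD (M : ℕ) (t : ℝ) : ℝ :=
  ∑ n ∈ Finset.range M, wA n * ((n : ℝ) * t ^ (n - 1))

lemma hasDerivAt_wP (M : ℕ) (t : ℝ) : HasDerivAt (wP M) (wD M t) t := by
  have : HasDerivAt (fun t => ∑ n ∈ Finset.range M, wA n * t ^ n) (wD M t) t := by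
    apply HasDerivAt.fun_sum
    intro n _
    simpa [mul_comm] using (hasDerivAt_pow n t).const_mul (wA n)
  exact this

lemma wD_key (m : ℕ) (t : ℝ) :
    2 * (1 - t) * wD (m + 1) t = wP (m + 1) t - (2 * (m : ℝ) + 1) * wA m * t ^ m := by
  induction m with
  | zero => simp [wD, wP, wA_zero]
  | succ k ih =>
      have hD : wD (k + 2) t = wD (k + 1) t + wA (k + 1) * (((k : ℝ) + 1) * t ^ k) := by
        rw [wD, Finset.sum_range_succ, ← wD]
        push_cast
        ring_nf
      have hP : wP (k + 2) t = wP (k + 1) t + wA (k + 1) * t ^ (k + 1) := by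
        rw [wP, Finset.sum_range_succ, ← wP]
      have hrec := wA_rec k
      rw [hD, hP]
      push_cast
      linear_combination ih + t ^ k * hrec

lemma wP_ge_one (m : ℕ) {t : ℝ} (ht : 0 ≤ t) : 1 ≤ wP (m + 1) t := by
  rw [wP, Finset.sum_range_succ']
  have h0 : wA 0 * t ^ 0 = 1 := by simp [wA_zero]
  rw [h0]
  have : 0 ≤ ∑ i ∈ Finset.range m, wA (i + 1) * t ^ (i + 1) := by
    apply Finset.sum_nonneg
    intro i _
    exact mul_nonneg (wA_pos _).le (pow_nonneg ht _)
  linarith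

lemma wP_zero (m : ℕ) : wP (m + 1) 0 = 1 := by
  rw [wP, Finset.sum_range_succ']
  simp [wA_zero]

lemma continuous_wP (M : ℕ) : Continuous (wP M) := by
  apply continuous_finset_sum
  intro n _
  fun_prop

/-- The main polynomial inequality: `(1-t) * wP(t)² < 1` for `t ∈ (0,1]`. -/
lemma key_ineq (m : ℕ) {t : ℝ} (ht0 : 0 < t) (ht1 : t ≤ 1) :
    (1 - t) * (wP (m + 1) t) ^ 2 < 1 := by
  set h : ℝ → ℝ := fun t => (1 - t) * (wP (m + 1) t) ^ 2 with hh
  have hanti : StrictAntiOn h (Set.Icc 0 1) := by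
    apply strictAntiOn_of_deriv_neg (convex_Icc 0 1)
    · exact ((continuous_const.sub continuous_id).mul
        ((continuous_wP (m + 1)).pow 2)).continuousOn
    · intro x hx
      rw [interior_Icc] at hx
      have hd : HasDerivAt h
          ((-1) * (wP (m + 1) x) ^ 2
            + (1 - x) * ((2 : ℕ) * (wP (m + 1) x) ^ 1 * wD (m + 1) x)) x := by
        exact (((hasDerivAt_id x).const_sub 1)).mul ((hasDerivAt_wP (m + 1) x).pow 2)
      rw [hd.deriv]
      have hk := wD_key m x
      have hwP : 1 ≤ wP (m + 1) x := wP_ge_one m hx.1.le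
      have hpow : 0 < x ^ m := pow_pos hx.1 m
      have hA : 0 < wA m := wA_pos m
      have heq : (-1) * (wP (m + 1) x) ^ 2
          + (1 - x) * ((2 : ℕ) * (wP (m + 1) x) ^ 1 * wD (m + 1) x)
          = -((2 * (m : ℝ) + 1) * wA m * x ^ m * wP (m + 1) x) := by
        push_cast
        linear_combination (wP (m + 1) x) * hk
      rw [heq]
      have h5 : 0 < (2 * (m : ℝ) + 1) * wA m * x ^ m * wP (m + 1) x :=
        mul_pos (mul_pos (mul_pos (by positivity) hA) hpow) (by linarith)
      linarith
  have h0 : h 0 = 1 := by simp [hh, wP_zero]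
  have := hanti (Set.mem_Icc.mpr ⟨le_refl 0, zero_le_one⟩)
    (Set.mem_Icc.mpr ⟨ht0.le, ht1⟩) ht0
  rw [h0] at this
  exact this

/-- The antiderivative used for the integral computation. -/
noncomputable def wG (M : ℕ) (θ : ℝ) : ℝ :=
  ∑ n ∈ Finset.range M, wA n * (Real.sin θ ^ (2 * n + 1) / (2 * (n : ℝ) + 1))

lemma hasDerivAt_wG (M : ℕ) (θ : ℝ) :
    HasDerivAt (wG M) (wP M (Real.sin θ ^ 2) * Real.cos θ) θ := by
  have hsum : HasDerivAt (wG M)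
      (∑ n ∈ Finset.range M,
        wA n * (((2 * (n : ℝ) + 1) * Real.sin θ ^ (2 * n) * Real.cos θ) / (2 * (n : ℝ) + 1)))
      θ := by
    apply HasDerivAt.fun_sum
    intro n _
    have h1 : HasDerivAt (fun θ => Real.sin θ ^ (2 * n + 1))
        ((((2 * n + 1) : ℕ) : ℝ) * Real.sin θ ^ (2 * n + 1 - 1) * Real.cos θ) θ :=
      (Real.hasDerivAt_sin θ).pow (2 * n + 1)
    have h2 : (((2 * n + 1) : ℕ) : ℝ) = 2 * (n : ℝ) + 1 := by push_cast; ring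
    have h3 : 2 * n + 1 - 1 = 2 * n := by omega
    rw [h2, h3] at h1
    exact (h1.div_const (2 * (n : ℝ) + 1)).const_mul (wA n)
  have heq : (∑ n ∈ Finset.range M,
        wA n * (((2 * (n : ℝ) + 1) * Real.sin θ ^ (2 * n) * Real.cos θ) / (2 * (n : ℝ) + 1)))
      = wP M (Real.sin θ ^ 2) * Real.cos θ := by
    rw [wP, Finset.sum_mul]
    apply Finset.sum_congr rfl
    intro n _
    have hn : (2 * (n : ℝ) + 1) ≠ 0 := by positivity
    rw [← pow_mul]
    field_simp
  rwa [heq] at hsum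

lemma SsumFD_eq (M : ℕ) : SsumFD M = ∑ n ∈ Finset.range M, wA n / (2 * (n : ℝ) + 1) := by
  rw [SsumFD]
  have : Finset.Icc 1 M = Finset.Ico 1 (M + 1) := by
    ext x; simp [Nat.lt_succ_iff]
  rw [this, Finset.sum_Ico_eq_sum_range]
  have hM : M + 1 - 1 = M := by omega
  rw [hM]
  apply Finset.sum_congr rfl
  intro n _
  have e1 : 2 * (1 + n) - 3 = 2 * n - 1 := by omega
  have e2 : 2 * (1 + n) - 1 = 2 * n + 1 := by omega
  rw [e1, e2, wA]
  have hfac : ((2 * n + 1)! : ℕ) = (2 * n + 1) * (2 * n - 1)‼ * (2 * n)‼ := by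
    rw [Nat.factorial_eq_mul_doubleFactorial, doubleFactorial_two_mul_add_one]
  rw [hfac]
  have hd1 : (((2 * n - 1)‼ : ℕ) : ℝ) ≠ 0 := by exact_mod_cast (Nat.doubleFactorial_pos _).ne'
  have hd2 : (((2 * n)‼ : ℕ) : ℝ) ≠ 0 := by exact_mod_cast (Nat.doubleFactorial_pos _).ne'
  have hn : ((2 * (n : ℝ)) + 1) ≠ 0 := by positivity
  push_cast
  field_simp

/-- For every `M ≥ 1`, `1 ≤ S_M < π/2`, so `2/π < ν_max^{2M} = 1/S_M ≤ 1`. -/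
theorem SsumFD_bounds (M : ℕ) (hM : 1 ≤ M) :
    1 ≤ SsumFD M ∧ SsumFD M < Real.pi / 2 ∧
    2 / Real.pi < 1 / SsumFD M ∧ 1 / SsumFD M ≤ 1 := by
  obtain ⟨m, rfl⟩ : ∃ m, M = m + 1 := ⟨M - 1, by omega⟩
  -- lower bound
  have h1 : 1 ≤ SsumFD (m + 1) := by
    rw [SsumFD_eq, Finset.sum_range_succ']
    have h0 : wA 0 / (2 * ((0 : ℕ) : ℝ) + 1) = 1 := by simp [wA_zero]
    rw [h0]
    have : 0 ≤ ∑ i ∈ Finset.range m, wA (i + 1) / (2 * ((i + 1 : ℕ) : ℝ) + 1) := by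
      apply Finset.sum_nonneg
      intro i _
      apply div_nonneg (wA_pos _).le
      positivity
    linarith
  -- upper bound
  have h2 : SsumFD (m + 1) < Real.pi / 2 := by
    have hπ : (0 : ℝ) < Real.pi / 2 := by positivity
    set F : ℝ → ℝ := fun θ => wP (m + 1) (Real.sin θ ^ 2) * Real.cos θ with hF
    have hFcont : Continuous F := by
      apply Continuous.mul _ Real.continuous_cos
      exact (continuous_wP (m + 1)).comp ((Real.continuous_sin).pow 2)
    have hint : ∫ θ in (0 : ℝ)..(Real.pi / 2), F θ = SsumFD (m + 1) := by
      rw [intervalIntegral.integral_eq_sub_of_hasDerivAt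
        (f := wG (m + 1)) (fun θ _ => hasDerivAt_wG (m + 1) θ)
        (hFcont.intervalIntegrable _ _)]
      have hG0 : wG (m + 1) 0 = 0 := by
        rw [wG]
        apply Finset.sum_eq_zero
        intro n _
        simp [Real.sin_zero, zero_pow (Nat.succ_ne_zero (2 * n))]
      have hGpi : wG (m + 1) (Real.pi / 2) = SsumFD (m + 1) := by
        rw [wG, SsumFD_eq]
        apply Finset.sum_congr rfl
        intro n _
        rw [Real.sin_pi_div_two, one_pow]
        ring
      rw [hG0, hGpi, sub_zero]
    have hlt : ∫ θ in (0 : ℝ)..(Real.pi / 2), F θ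
        < ∫ _ in (0 : ℝ)..(Real.pi / 2), (1 : ℝ) := by
      apply intervalIntegral.integral_lt_integral_of_continuousOn_of_le_of_exists_lt hπ
        hFcont.continuousOn continuousOn_const
      · intro θ hθ
        obtain ⟨hθ0, hθπ⟩ := hθ
        have hsin : 0 < Real.sin θ := Real.sin_pos_of_pos_of_lt_pi hθ0
          (lt_of_le_of_lt hθπ (by linarith [Real.pi_pos]))
        have hsin1 : Real.sin θ ≤ 1 := Real.sin_le_one θ
        have hcos : 0 ≤ Real.cos θ := Real.cos_nonneg_of_mem_Icc ⟨by linarith, hθπ⟩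
        have ht0 : 0 < Real.sin θ ^ 2 := by positivity
        have ht1 : Real.sin θ ^ 2 ≤ 1 := by nlinarith
        have hkey := key_ineq m ht0 ht1
        have hcossq : Real.cos θ ^ 2 = 1 - Real.sin θ ^ 2 := Real.cos_sq' θ
        have hFθ2 : F θ ^ 2 < 1 := by
          rw [hF]
          simp only
          nlinarith
        have hFθnn : 0 ≤ F θ := by
          apply mul_nonneg _ hcos
          linarith [wP_ge_one m ht0.le]
        nlinarith
      · refine ⟨Real.pi / 2, ⟨by positivity, le_refl _⟩, ?_⟩
        rw [hF]
        simp [Real.cos_pi_div_two]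
    rw [hint] at hlt
    simpa using hlt
  have hSpos : 0 < SsumFD (m + 1) := lt_of_lt_of_le one_pos h1
  refine ⟨h1, h2, ?_, (div_le_one hSpos).mpr h1⟩
  have := one_div_lt_one_div_of_lt hSpos h2
  rwa [one_div_div] at this
end

section
/- Fix M ≥ 1 and suppose k(K) is a family of solutions of the FD2M dispersion relation ∑_{p=1}^{M} ([(2p-3)!!]²/(2p-1)!) sin^{2p-1}(k h / 2) = K/2 (with K = k_ex h) satisfying k = k_ex(1 + O(K^τ)) for some τ > 0 as K → 0. Then in fact k = k_ex(1 + ([(2M-1)!!]²/(2^{2M}(2M+1)!)) K^{2M} + O(K^{2M+2})), i.e., the dispersion error of the physical mode of the FD2M scheme is of order 2M. -/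
open Nat Finset Real Filter Asymptotics Topology

noncomputable def fOSq : ℝ → ℝ := fun u => (1 - u) ^ (-(1/2) : ℝ)
noncomputable def aa : ℕ → ℝ := fun n => ((2*n-1)‼ : ℝ) / 2^n
noncomputable def bb : ℕ → ℝ := fun n => aa n / (n ! : ℝ)

lemma aa_pos (n : ℕ) : 0 < aa n := by
  have := Nat.doubleFactorial_pos (2*n-1)
  unfold aa; positivity

lemma bb_pos (n : ℕ) : 0 < bb n := by
  have h := aa_pos n
  have h2 := Nat.factorial_pos n
  unfold bb
  positivity

lemma aa_succ (n : ℕ) : aa (n+1) = aa n * ((n : ℝ) + 1/2) := by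
  cases n with
  | zero => norm_num [aa]
  | succ m =>
    unfold aa
    have h1 : 2*(m+1+1)-1 = (2*(m+1)-1) + 2 := by omega
    rw [h1, Nat.doubleFactorial_add_two]
    have h2 : ((2*(m+1)-1 : ℕ) : ℝ) = 2*(m:ℝ)+1 := by
      have : (2*(m+1)-1 : ℕ) = 2*m+1 := by omega
      rw [this]; push_cast; ring
    push_cast [h2]
    ring

lemma hasDerivAt_aux (p : ℝ) {u : ℝ} (hu : u < 1) :
    HasDerivAt (fun x : ℝ => (1 - x) ^ p) (-(p * (1 - u) ^ (p - 1))) u := by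
  have h1 : HasDerivAt (fun x : ℝ => 1 - x) (-1) u := by
    simpa using (hasDerivAt_const u (1:ℝ)).fun_sub (hasDerivAt_id u)
  have h2 : HasDerivAt (fun y : ℝ => y ^ p) (p * (1 - u) ^ (p - 1)) (1 - u) :=
    Real.hasDerivAt_rpow_const (Or.inl (by linarith))
  simpa [mul_comm, Function.comp_def] using h2.comp u h1

lemma contDiffOn_fOSq (m : ℕ) {b : ℝ} (hb : b < 1) :
    ContDiffOn ℝ m fOSq (Set.Icc 0 b) := by
  intro x hx
  have hx1 : (1 : ℝ) - x ≠ 0 := by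
    have h2 := hx.2; intro h
    have : x = 1 := by linarith
    linarith
  have h1 : ContDiffAt ℝ m (fun y : ℝ => y ^ (-(1/2) : ℝ)) (1 - x) :=
    Real.contDiffAt_rpow_const_of_ne hx1
  have h2 : ContDiffAt ℝ m (fun y : ℝ => 1 - y) x :=
    (contDiffAt_const (c := (1:ℝ))).sub contDiffAt_id
  exact (h1.comp x h2).contDiffWithinAt

lemma iteratedDerivWithin_fOSq {b : ℝ} (hb0 : 0 < b) (hb : b < 1) (n : ℕ) :
    ∀ x ∈ Set.Icc (0:ℝ) b,
      iteratedDerivWithin n fOSq (Set.Icc 0 b) x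
        = aa n * (1 - x) ^ (-(1/2 : ℝ) - n) := by
  induction n with
  | zero =>
    intro x hx
    simp [iteratedDerivWithin_zero, aa, fOSq]
  | succ n ih =>
    intro x hx
    have hud : UniqueDiffOn ℝ (Set.Icc (0:ℝ) b) := uniqueDiffOn_Icc hb0
    rw [iteratedDerivWithin_succ]
    have hcongr : derivWithin (iteratedDerivWithin n fOSq (Set.Icc 0 b)) (Set.Icc 0 b) x
        = derivWithin (fun u => aa n * (1 - u) ^ (-(1/2 : ℝ) - n)) (Set.Icc 0 b) x := by
      apply derivWithin_congr
      · intro y hy; exact ih y hy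
      · exact ih x hx
    rw [hcongr]
    have hx1 : x < 1 := lt_of_le_of_lt hx.2 hb
    have hd : HasDerivAt (fun u : ℝ => aa n * (1 - u) ^ (-(1/2 : ℝ) - n))
        (aa n * -((-(1/2 : ℝ) - n) * (1 - x) ^ ((-(1/2 : ℝ) - n) - 1))) x :=
      (hasDerivAt_aux _ hx1).const_mul (aa n)
    rw [hd.hasDerivWithinAt.derivWithin (hud x hx)]
    rw [aa_succ]
    have he : (-(1/2 : ℝ) - n) - 1 = -(1/2 : ℝ) - (n+1 : ℕ) := by push_cast; ring
    rw [he]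
    ring

lemma taylor_fOSq (M : ℕ) :
    ∃ C > 0, ∀ u ∈ Set.Icc (0:ℝ) (1/2),
      |fOSq u - ∑ i ∈ Finset.range (M+1), bb i * u^i| ≤ C * u^(M+1) := by
  have hb0 : (0:ℝ) < 1/2 := by norm_num
  have hb1 : (1:ℝ)/2 < 1 := by norm_num
  set S := Set.Icc (0:ℝ) (1/2) with hS
  -- continuity of the (M+1)-st derivative on S
  have hcont : ContinuousOn (fun u => aa (M+1) * (1 - u) ^ (-(1/2 : ℝ) - (M+1:ℕ))) S := by
    intro x hx
    have hx1 : (1:ℝ) - x ≠ 0 := by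
      have := hx.2; intro h
      have : x = 1 := by linarith
      simp only [hS, Set.mem_Icc] at hx; linarith [hx.2]
    have h1 : ContinuousAt (fun u : ℝ => (1 - u) ^ (-(1/2 : ℝ) - (M+1:ℕ))) x :=
      (Real.continuousAt_rpow_const _ _ (Or.inl hx1)).comp
        (by fun_prop : ContinuousAt (fun u : ℝ => 1 - u) x)
    exact (h1.const_smul (aa (M+1))).continuousWithinAt
  obtain ⟨C0, hC0⟩ := (isCompact_Icc (a := (0:ℝ)) (b := 1/2)).exists_bound_of_continuousOn hcont
  set C : ℝ := max C0 1 with hC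
  refine ⟨C / (M ! : ℝ) + 1, by positivity, ?_⟩
  intro u hu
  have hbound : ∀ y ∈ S, ‖iteratedDerivWithin (M+1) fOSq S y‖ ≤ C := by
    intro y hy
    rw [iteratedDerivWithin_fOSq hb0 hb1 (M+1) y hy]
    exact le_trans (hC0 y hy) (le_max_left _ _)
  have htaylor := taylor_mean_remainder_bound (f := fOSq) (le_of_lt hb0)
    (contDiffOn_fOSq (M+1) hb1) hu hbound
  have hsum : taylorWithinEval fOSq M S 0 u = ∑ i ∈ Finset.range (M+1), bb i * u^i := by
    rw [taylor_within_apply]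
    apply Finset.sum_congr rfl
    intro k hk
    rw [iteratedDerivWithin_fOSq hb0 hb1 k 0 (by constructor <;> norm_num)]
    simp only [smul_eq_mul, sub_zero]
    norm_num [Real.one_rpow, bb]
    ring
  rw [hsum] at htaylor
  have hM : (0:ℝ) < (M ! : ℝ) := by positivity
  have hu1 : 0 ≤ u ^ (M+1) := pow_nonneg hu.1 _
  calc |fOSq u - ∑ i ∈ Finset.range (M+1), bb i * u^i|
      ≤ C * (u - 0)^(M+1) / (M !) := htaylor
    _ = C / (M !) * u^(M+1) := by rw [sub_zero]; ring
    _ ≤ (C / (M !) + 1) * u^(M+1) := by nlinarith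

noncomputable def Psum (M : ℕ) : ℝ → ℝ :=
  fun s => ∑ i ∈ Finset.range (M+1), bb i / (2*i+1) * s^(2*i+1)
noncomputable def Phi (M : ℕ) : ℝ → ℝ := fun s => Real.arcsin s - Psum M s

lemma fOSq_sq {s : ℝ} (hs : |s| < 1) :
    fOSq (s^2) = 1 / Real.sqrt (1 - s^2) := by
  have h1 : (0:ℝ) < 1 - s^2 := by
    have := abs_lt.1 hs
    nlinarith
  unfold fOSq
  rw [Real.rpow_neg h1.le, ← Real.sqrt_eq_rpow, one_div]

lemma hasDerivAt_Phi (M : ℕ) {s : ℝ} (hs : |s| < 1) :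
    HasDerivAt (Phi M) (fOSq (s^2) - ∑ i ∈ Finset.range (M+1), bb i * s^(2*i)) s := by
  have habs := abs_lt.1 hs
  have h1 : HasDerivAt Real.arcsin (1 / Real.sqrt (1 - s^2)) s :=
    Real.hasDerivAt_arcsin (by linarith) (by linarith)
  have h2 : HasDerivAt (Psum M) (∑ i ∈ Finset.range (M+1), bb i * s^(2*i)) s := by
    have : HasDerivAt (fun t : ℝ => ∑ i ∈ Finset.range (M+1), bb i / (2*i+1) * t^(2*i+1))
        (∑ i ∈ Finset.range (M+1), bb i / (2*i+1) * ((2*i+1) * s^(2*i))) s := by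
      apply HasDerivAt.fun_sum
      intro i _
      simpa using (hasDerivAt_pow (2*i+1) s).const_mul (bb i / (2*i+1))
    have heq : (∑ i ∈ Finset.range (M+1), bb i / (2*(i:ℝ)+1) * ((2*(i:ℝ)+1) * s^(2*i)))
        = ∑ i ∈ Finset.range (M+1), bb i * s^(2*i) := by
      apply Finset.sum_congr rfl
      intro i _
      have hne : (2*(i:ℝ)+1) ≠ 0 := by positivity
      field_simp
    rw [heq] at this
    exact this.congr_deriv rfl
  rw [fOSq_sq hs]
  exact h1.sub h2

lemma Phi_bound (M : ℕ) :
    ∃ C > 0, ∀ s : ℝ, |s| ≤ 1/2 → |Phi M s| ≤ C * |s|^(2*M+3) := by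
  obtain ⟨C, hCpos, hC⟩ := taylor_fOSq M
  refine ⟨C, hCpos, ?_⟩
  intro s hs
  have hPhi0 : Phi M 0 = 0 := by
    simp [Phi, Psum, Real.arcsin_zero]
  have habs_le : ∀ t ∈ Set.uIcc (0:ℝ) s, |t| ≤ |s| := by
    intro t ht
    rcases Set.mem_uIcc.1 ht with ⟨h1, h2⟩ | ⟨h1, h2⟩
    · rw [abs_of_nonneg h1]; exact le_trans h2 (le_abs_self s)
    · rw [abs_of_nonpos h2]; exact le_trans (neg_le_neg h1) (neg_le_abs s)
  have hderiv : ∀ t ∈ Set.uIcc (0:ℝ) s,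
      HasDerivWithinAt (Phi M)
        (fOSq (t^2) - ∑ i ∈ Finset.range (M+1), bb i * t^(2*i)) (Set.uIcc 0 s) t :=
    fun t ht => (hasDerivAt_Phi M (lt_of_le_of_lt (le_trans (habs_le t ht) hs) (by norm_num))).hasDerivWithinAt
  have hbound : ∀ t ∈ Set.uIcc (0:ℝ) s,
      ‖fOSq (t^2) - ∑ i ∈ Finset.range (M+1), bb i * t^(2*i)‖ ≤ C * |s|^(2*M+2) := by
    intro t ht
    have ht2 : t^2 ∈ Set.Icc (0:ℝ) (1/2) := by
      constructor
      · positivity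
      · have h := le_trans (habs_le t ht) hs
        nlinarith [abs_nonneg t, sq_abs t]
    have h1 := hC (t^2) ht2
    have hsum : ∑ i ∈ Finset.range (M+1), bb i * (t^2)^i
        = ∑ i ∈ Finset.range (M+1), bb i * t^(2*i) := by
      apply Finset.sum_congr rfl; intro i _; rw [pow_mul]
    rw [hsum] at h1
    have h2 : (t^2)^(M+1) = |t|^(2*M+2) := by
      have h4 : |t|^(2*M+2) = (|t|^2)^(M+1) := by
        rw [← pow_mul]; congr 1
      rw [h4, sq_abs]
    rw [h2] at h1
    have h3 : |t|^(2*M+2) ≤ |s|^(2*M+2) :=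
      pow_le_pow_left₀ (abs_nonneg t) (habs_le t ht) _
    calc ‖fOSq (t^2) - ∑ i ∈ Finset.range (M+1), bb i * t^(2*i)‖ ≤ C * |t|^(2*M+2) := h1
      _ ≤ C * |s|^(2*M+2) := by nlinarith
  have hmvt := Convex.norm_image_sub_le_of_norm_hasDerivWithin_le hderiv hbound
    (convex_uIcc 0 s) (Set.left_mem_uIcc) (Set.right_mem_uIcc)
  rw [hPhi0, sub_zero] at hmvt
  calc |Phi M s| ≤ C * |s|^(2*M+2) * ‖s - 0‖ := hmvt
    _ = C * |s|^(2*M+3) := by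
        rw [sub_zero, Real.norm_eq_abs, show 2*M+3 = (2*M+2)+1 by omega, pow_succ]
        ring

lemma abs_pow_sub_pow_le' (a b R : ℝ) (hR0 : 0 ≤ R) (ha : |a| ≤ R) (hb : |b| ≤ R) :
    ∀ n : ℕ, |a^(n+1) - b^(n+1)| ≤ (n+1) * R^n * |a - b| := by
  intro n
  induction n with
  | zero => simp
  | succ n ih =>
    have key : a^(n+2) - b^(n+2) = a * (a^(n+1) - b^(n+1)) + (a - b) * b^(n+1) := by ring
    have hb1 : |b^(n+1)| ≤ R^(n+1) := by
      rw [abs_pow]; exact pow_le_pow_left₀ (abs_nonneg b) hb _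
    calc |a^(n+2) - b^(n+2)|
        ≤ |a * (a^(n+1) - b^(n+1))| + |(a - b) * b^(n+1)| := by rw [key]; exact abs_add_le _ _
      _ = |a| * |a^(n+1) - b^(n+1)| + |a - b| * |b^(n+1)| := by rw [abs_mul, abs_mul]
      _ ≤ R * ((n+1) * R^n * |a - b|) + |a - b| * R^(n+1) := by
          have h1 : |a| * |a^(n+1) - b^(n+1)| ≤ R * ((n+1) * R^n * |a - b|) := by
            apply mul_le_mul ha ih (abs_nonneg _) hR0
          have h2 : |a - b| * |b^(n+1)| ≤ |a - b| * R^(n+1) :=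
            mul_le_mul_of_nonneg_left hb1 (abs_nonneg _)
          linarith
      _ = ((n:ℝ)+2) * R^(n+1) * |a - b| := by rw [pow_succ]; push_cast; ring
      _ = (↑(n+1)+1) * R^(n+1) * |a - b| := by push_cast; ring

lemma abs_sin_sub_le {x : ℝ} (hx : |x| ≤ 1) : |Real.sin x - x| ≤ |x|^3 := by
  have key : ∀ y : ℝ, 0 < y → y ≤ 1 → |Real.sin y - y| ≤ |y|^3 := by
    intro y hy0 hy1
    have h1 := Real.sin_lt hy0
    have h2 := Real.sin_gt_sub_cube hy0
    rw [abs_of_pos hy0]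
    rw [abs_of_nonpos (by linarith)]
    nlinarith
  rcases lt_trichotomy x 0 with h | h | h
  · have := key (-x) (by linarith) (by rwa [abs_of_neg h] at hx)
    rw [Real.sin_neg, abs_neg] at this
    calc |Real.sin x - x| = |-(Real.sin x - x)| := (abs_neg _).symm
      _ = |(-Real.sin x) - (-x)| := by ring_nf
      _ ≤ |x|^3 := this
  · simp [h]
  · exact key x h (by rwa [abs_of_pos h] at hx)

lemma cc_eq (i : ℕ) :
    ((2*(i+1)-3)‼ : ℝ)^2 / ((2*(i+1)-1)! : ℝ) = bb i / (2*(i:ℝ)+1) := by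
  have h1 : 2*(i+1)-3 = 2*i-1 := by omega
  have h2 : 2*(i+1)-1 = 2*i+1 := by omega
  rw [h1, h2]
  have h3 : (2*i+1)! = (2*i+1)‼ * (2*i)‼ := Nat.factorial_eq_mul_doubleFactorial (2*i)
  have h4 : (2*i+1)‼ = (2*i+1) * (2*i-1)‼ := Nat.doubleFactorial_add_one (2*i)
  have h5 : (2*i)‼ = 2^i * i ! := Nat.doubleFactorial_two_mul i
  rw [h3, h4, h5]
  have hD : (0:ℝ) < ((2*i-1)‼ : ℕ) := by exact_mod_cast Nat.doubleFactorial_pos _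
  have hf : (0:ℝ) < (i ! : ℕ) := by exact_mod_cast Nat.factorial_pos i
  have h2i : (0:ℝ) < 2*(i:ℝ)+1 := by positivity
  unfold bb aa
  push_cast
  field_simp

lemma sum_Icc_eq (M : ℕ) (t : ℝ) :
    ∑ p ∈ Finset.Icc 1 M, ((2*p-3)‼ : ℝ)^2 / ((2*p-1)! : ℝ) * t^(2*p-1)
      = Psum M t - bb M / (2*(M:ℝ)+1) * t^(2*M+1) := by
  have h1 : ∑ p ∈ Finset.Icc 1 M, ((2*p-3)‼ : ℝ)^2 / ((2*p-1)! : ℝ) * t^(2*p-1)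
      = ∑ i ∈ Finset.range M, bb i / (2*(i:ℝ)+1) * t^(2*i+1) := by
    rw [← Finset.Ico_add_one_right_eq_Icc, Finset.sum_Ico_eq_sum_range,
      show M+1-1 = M from by omega]
    apply Finset.sum_congr rfl
    intro i _
    have he : 2*(1+i)-1 = 2*i+1 := by omega
    rw [show (1+i) = i+1 by omega, cc_eq i, show 2*(i+1)-1 = 2*i+1 by omega]
  rw [h1]
  unfold Psum
  rw [Finset.sum_range_succ]
  ring

lemma gfun_bound (M : ℕ) :
    ∃ C > 0, ∀ x : ℝ, |x| ≤ 1/2 →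
      |x - (∑ p ∈ Finset.Icc 1 M, ((2*p-3)‼ : ℝ)^2 / ((2*p-1)! : ℝ) * Real.sin x ^ (2*p-1))
        - bb M / (2*(M:ℝ)+1) * x^(2*M+1)| ≤ C * |x|^(2*M+3) := by
  obtain ⟨C1, hC1pos, hC1⟩ := Phi_bound M
  set A : ℝ := bb M / (2*(M:ℝ)+1) with hA
  have hApos : 0 < A := by
    have := bb_pos M
    have h2 : (0:ℝ) < 2*(M:ℝ)+1 := by positivity
    positivity
  refine ⟨C1 + A * (2*(M:ℝ)+1), by positivity, ?_⟩
  intro x hx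
  have hsin_le : |Real.sin x| ≤ |x| := Real.abs_sin_le_abs
  have hsin_half : |Real.sin x| ≤ 1/2 := le_trans hsin_le hx
  have harc : Real.arcsin (Real.sin x) = x := by
    have hpi := Real.pi_gt_three
    have h := abs_le.1 hx
    apply Real.arcsin_sin <;> linarith
  rw [sum_Icc_eq M (Real.sin x)]
  have hrw : x - (Psum M (Real.sin x) - A * Real.sin x ^ (2*M+1)) - A * x^(2*M+1)
      = Phi M (Real.sin x) + A * (Real.sin x ^ (2*M+1) - x^(2*M+1)) := by
    unfold Phi
    rw [harc]
    ring
  rw [hrw]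
  have h1 : |Phi M (Real.sin x)| ≤ C1 * |x|^(2*M+3) := by
    calc |Phi M (Real.sin x)| ≤ C1 * |Real.sin x|^(2*M+3) := hC1 _ hsin_half
      _ ≤ C1 * |x|^(2*M+3) := by
          have := pow_le_pow_left₀ (abs_nonneg (Real.sin x)) hsin_le (2*M+3)
          nlinarith
  have h2 : |Real.sin x ^ (2*M+1) - x^(2*M+1)| ≤ (2*(M:ℝ)+1) * |x|^(2*M+3) := by
    have hx1 : |x| ≤ 1 := le_trans hx (by norm_num)
    have hcube := abs_sin_sub_le hx1
    have hppl := abs_pow_sub_pow_le' (Real.sin x) x |x| (abs_nonneg x) hsin_le (le_refl _) (2*M)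
    rw [show 2*M+1 = (2*M)+1 from rfl] at *
    calc |Real.sin x ^ (2*M+1) - x^(2*M+1)|
        ≤ ((2*M:ℕ)+1) * |x|^(2*M) * |Real.sin x - x| := hppl
      _ ≤ ((2*M:ℕ)+1) * |x|^(2*M) * |x|^3 := by
          apply mul_le_mul_of_nonneg_left hcube
          positivity
      _ = (2*(M:ℝ)+1) * |x|^(2*M+3) := by
          have : |x|^(2*M) * |x|^3 = |x|^(2*M+3) := by rw [← pow_add]
          push_cast
          rw [mul_assoc, this]
  calc |Phi M (Real.sin x) + A * (Real.sin x ^ (2*M+1) - x^(2*M+1))|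
      ≤ |Phi M (Real.sin x)| + |A * (Real.sin x ^ (2*M+1) - x^(2*M+1))| := abs_add_le _ _
    _ = |Phi M (Real.sin x)| + A * |Real.sin x ^ (2*M+1) - x^(2*M+1)| := by
        rw [abs_mul, abs_of_pos hApos]
    _ ≤ C1 * |x|^(2*M+3) + A * ((2*(M:ℝ)+1) * |x|^(2*M+3)) := by
        have := mul_le_mul_of_nonneg_left h2 hApos.le
        linarith
    _ = (C1 + A * (2*(M:ℝ)+1)) * |x|^(2*M+3) := by ring

/-- Order of the numerical dispersion error of the `2M`-th order staggered FD
scheme (Theorem 5.1): if `kk K` (the discrete wavenumber times `h`, as a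
function of `K = k_ex h`) solves the FD2M dispersion relation
`∑_{p=1}^{M} ([(2p-3)!!]²/(2p-1)!) sin^{2p-1}(kk K/2) = K/2` near `K = 0`
and satisfies `kk K = K(1 + O(K^τ))` for some `τ > 0`, then
`kk K = K(1 + ([(2M-1)!!]²/(2^{2M}(2M+1)!)) K^{2M} + O(K^{2M+2}))`. -/
theorem fd2M_dispersion_order (M : ℕ) (hM : 1 ≤ M) (τ : ℝ) (hτ : 0 < τ)
    (kk : ℝ → ℝ)
    (hdisp : ∀ᶠ K in nhdsWithin (0 : ℝ) {0}ᶜ,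
      ∑ p ∈ Finset.Icc 1 M,
        ((2 * p - 3)‼ : ℝ) ^ 2 / ((2 * p - 1)! : ℝ) *
          Real.sin (kk K / 2) ^ (2 * p - 1) = K / 2)
    (hphys : (fun K : ℝ => kk K / K - 1)
        =O[nhdsWithin (0 : ℝ) {0}ᶜ] fun K : ℝ => |K| ^ τ) :
    (fun K : ℝ => kk K / K -
        (1 + ((2 * M - 1)‼ : ℝ) ^ 2 / (2 ^ (2 * M) * ((2 * M + 1)! : ℝ)) *
          K ^ (2 * M)))
      =O[nhdsWithin (0 : ℝ) {0}ᶜ] fun K : ℝ => K ^ (2 * M + 2) := by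
  set L := nhdsWithin (0 : ℝ) {0}ᶜ with hL
  set A : ℝ := bb M / (2*(M:ℝ)+1) with hA
  have hApos : 0 < A := by
    have := bb_pos M
    have h2 : (0:ℝ) < 2*(M:ℝ)+1 := by positivity
    positivity
  set a : ℝ := A / 2^(2*M) with ha
  have hapos : 0 < a := by positivity
  -- the coefficient in the statement equals `a`
  have hcoeff : ((2 * M - 1)‼ : ℝ) ^ 2 / (2 ^ (2 * M) * ((2 * M + 1)! : ℝ)) = a := by
    have h1 := cc_eq M
    rw [show 2*(M+1)-3 = 2*M-1 from by omega, show 2*(M+1)-1 = 2*M+1 from by omega] at h1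
    rw [ha, hA, ← h1]
    have hf : (0:ℝ) < ((2*M+1)! : ℕ) := by exact_mod_cast Nat.factorial_pos _
    field_simp
  -- basic filter facts
  have hne : ∀ᶠ K in L, K ≠ 0 := by
    have := self_mem_nhdsWithin (a := (0:ℝ)) (s := ({0}ᶜ : Set ℝ))
    filter_upwards [this] with K hK
    simpa using hK
  have habs : Tendsto (fun K : ℝ => |K|) L (𝓝 0) := by
    have h1 : Tendsto (fun K : ℝ => |K|) (𝓝 0) (𝓝 |0|) :=
      (continuous_abs).tendsto 0
    rw [abs_zero] at h1
    exact h1.mono_left nhdsWithin_le_nhds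
  have hsmall : ∀ ε : ℝ, 0 < ε → ∀ᶠ K in L, |K| < ε := by
    intro ε hε
    exact habs.eventually_lt_const hε
  -- from hphys : eventually |kk K / K - 1| ≤ 1
  obtain ⟨c0, hc0⟩ := hphys.bound
  have hrpow : Tendsto (fun K : ℝ => c0 * |K| ^ τ) L (𝓝 0) := by
    have h1 : ContinuousAt (fun y : ℝ => y ^ τ) 0 :=
      Real.continuousAt_rpow_const 0 τ (Or.inr hτ.le)
    have h2 : Tendsto (fun K : ℝ => |K| ^ τ) L (𝓝 ((0:ℝ) ^ τ)) :=
      (h1.tendsto.comp habs)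
    rw [Real.zero_rpow hτ.ne'] at h2
    simpa using h2.const_mul c0
  have ev1 : ∀ᶠ K in L, |kk K / K - 1| ≤ 1 := by
    have h2 : ∀ᶠ K in L, c0 * |K| ^ τ < 1 := hrpow.eventually_lt_const one_pos
    filter_upwards [hc0, h2] with K hK1 hK2
    have : ‖|K| ^ τ‖ = |K| ^ τ :=
      abs_of_nonneg (Real.rpow_nonneg (abs_nonneg K) τ)
    rw [Real.norm_eq_abs, this] at hK1
    linarith
  obtain ⟨Cg, hCgpos, hCg⟩ := gfun_bound M
  -- stage 1 : |kk K / K - 1| ≤ C1 * |K|^(2M)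
  set C1 : ℝ := 2*Cg + 2*A with hC1
  have hC1pos : 0 < C1 := by positivity
  have ev2 : ∀ᶠ K in L, |kk K / K - 1| ≤ C1 * |K|^(2*M) := by
    filter_upwards [hdisp, ev1, hne, hsmall (1/4) (by norm_num)] with K hsumK h1K hKne hKsm
    have hKpos : 0 < |K| := abs_pos.2 hKne
    have hkkK : |kk K / K| ≤ 2 := by
      calc |kk K / K| = |(kk K / K - 1) + 1| := by ring_nf
        _ ≤ |kk K / K - 1| + 1 := by
            have := abs_add_le (kk K / K - 1) 1
            simpa using this
        _ ≤ 2 := by linarith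
    have hkk : |kk K| ≤ 2 * |K| := by
      have h0 : kk K = (kk K / K) * K := by field_simp
      rw [h0, abs_mul]
      exact mul_le_mul_of_nonneg_right hkkK (abs_nonneg K) |>.trans_eq rfl
    have hx : |kk K / 2| ≤ |K| := by
      rw [abs_div]
      simp only [abs_two]
      linarith
    have hxhalf : |kk K / 2| ≤ 1/2 := by linarith
    have hE := hCg (kk K / 2) hxhalf
    rw [hsumK] at hE
    -- |kk K - K| bound
    have hid : kk K - K = 2*(kk K/2 - K/2 - A * (kk K/2)^(2*M+1)) + 2*A*(kk K/2)^(2*M+1) := by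
      ring
    have hxp1 : |kk K/2|^(2*M+1) ≤ |K|^(2*M+1) := pow_le_pow_left₀ (abs_nonneg _) hx _
    have hxp3 : |kk K/2|^(2*M+3) ≤ |K|^(2*M+1) := by
      calc |kk K/2|^(2*M+3) ≤ |K|^(2*M+3) := pow_le_pow_left₀ (abs_nonneg _) hx _
        _ ≤ |K|^(2*M+1) := pow_le_pow_of_le_one (abs_nonneg K) (by linarith) (by omega)
    have hdiff : |kk K - K| ≤ C1 * |K|^(2*M+1) := by
      rw [hid]
      calc |2*(kk K/2 - K/2 - A * (kk K/2)^(2*M+1)) + 2*A*(kk K/2)^(2*M+1)|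
          ≤ |2*(kk K/2 - K/2 - A * (kk K/2)^(2*M+1))| + |2*A*(kk K/2)^(2*M+1)| := abs_add_le _ _
        _ = 2*|kk K/2 - K/2 - A * (kk K/2)^(2*M+1)| + 2*A*|kk K/2|^(2*M+1) := by
            rw [abs_mul, abs_mul, abs_mul, abs_pow, abs_of_pos hApos, abs_two]
        _ ≤ 2*(Cg * |kk K/2|^(2*M+3)) + 2*A*|K|^(2*M+1) := by
            have := mul_le_mul_of_nonneg_left hxp1 (by positivity : (0:ℝ) ≤ 2*A)
            linarith
        _ ≤ 2*Cg*|K|^(2*M+1) + 2*A*|K|^(2*M+1) := by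
            have h5 : Cg * |kk K/2|^(2*M+3) ≤ Cg * |K|^(2*M+1) :=
              mul_le_mul_of_nonneg_left hxp3 hCgpos.le
            linarith
        _ = C1 * |K|^(2*M+1) := by rw [hC1]; ring
    have : |kk K / K - 1| = |kk K - K| / |K| := by
      rw [← abs_div]
      congr 1
      field_simp
    rw [this, div_le_iff₀ hKpos]
    calc |kk K - K| ≤ C1 * |K|^(2*M+1) := hdiff
      _ = C1 * |K|^(2*M) * |K| := by rw [pow_succ]; ring
  -- final stage
  rw [isBigO_iff]
  refine ⟨2*Cg + a*(2*(M:ℝ)+1)*2^(2*M)*C1, ?_⟩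
  filter_upwards [hdisp, ev1, hne, hsmall (1/4) (by norm_num), ev2]
    with K hsumK h1K hKne hKsm hst1
  have hKpos : 0 < |K| := abs_pos.2 hKne
  have hK1 : |K| ≤ 1 := by linarith
  have hkkK : |kk K / K| ≤ 2 := by
    calc |kk K / K| = |(kk K / K - 1) + 1| := by ring_nf
      _ ≤ |kk K / K - 1| + 1 := by
          have := abs_add_le (kk K / K - 1) 1
          simpa using this
      _ ≤ 2 := by linarith
  have hkk : |kk K| ≤ 2 * |K| := by
    have h0 : kk K = (kk K / K) * K := by field_simp
    rw [h0, abs_mul]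
    exact mul_le_mul_of_nonneg_right hkkK (abs_nonneg K)
  have hx : |kk K / 2| ≤ |K| := by
    rw [abs_div]
    simp only [abs_two]
    linarith
  have hxhalf : |kk K / 2| ≤ 1/2 := by linarith
  have hE := hCg (kk K / 2) hxhalf
  rw [hsumK] at hE
  have hEK : |kk K/2 - K/2 - A * (kk K/2)^(2*M+1)| ≤ Cg * |K|^(2*M+3) := by
    refine le_trans hE ?_
    exact mul_le_mul_of_nonneg_left (pow_le_pow_left₀ (abs_nonneg _) hx _) hCgpos.le
  -- algebraic identity
  have hid2 : kk K / K - (1 + a * K^(2*M))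
      = 2*(kk K/2 - K/2 - A * (kk K/2)^(2*M+1))/K
        + a * K^(2*M) * ((kk K / K)^(2*M+1) - 1) := by
    have e1 : (kk K/2)^(2*M+1) = (kk K)^(2*M+1)/2^(2*M+1) := div_pow _ _ _
    have e2 : (kk K/K)^(2*M+1) = (kk K)^(2*M+1)/K^(2*M+1) := div_pow _ _ _
    have e3 : K^(2*M+1) = K^(2*M)*K := pow_succ _ _
    have e4 : (2:ℝ)^(2*M+1) = 2^(2*M)*2 := pow_succ _ _
    rw [e1, e2, e3, e4, ha]
    have h2M : ((2:ℝ)^(2*M)) ≠ 0 := by positivity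
    field_simp
    ring
  -- bound the two pieces
  have ht1 : |2*(kk K/2 - K/2 - A * (kk K/2)^(2*M+1))/K| ≤ 2*Cg * |K|^(2*M+2) := by
    rw [abs_div, abs_mul, abs_two, div_le_iff₀ hKpos]
    calc 2 * |kk K/2 - K/2 - A * (kk K/2)^(2*M+1)| ≤ 2 * (Cg * |K|^(2*M+3)) := by linarith
      _ = 2*Cg * |K|^(2*M+2) * |K| := by
          rw [show 2*M+3 = (2*M+2)+1 from by omega, pow_succ]
          ring
  have hpow : |(kk K / K)^(2*M+1) - 1| ≤ ((2*M:ℕ)+1) * 2^(2*M) * |kk K / K - 1| := by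
    have h := abs_pow_sub_pow_le' (kk K / K) 1 2 (by norm_num) hkkK (by norm_num) (2*M)
    simpa using h
  have ht2 : |a * K^(2*M) * ((kk K / K)^(2*M+1) - 1)|
      ≤ a*(2*(M:ℝ)+1)*2^(2*M)*C1 * |K|^(2*M+2) := by
    rw [abs_mul, abs_mul, abs_of_pos hapos, abs_pow]
    have h1 : |(kk K / K)^(2*M+1) - 1| ≤ ((2*M:ℕ)+1) * 2^(2*M) * (C1 * |K|^(2*M)) := by
      refine le_trans hpow ?_
      have hc : (0:ℝ) ≤ ((2*M:ℕ)+1) * 2^(2*M) := by positivity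
      exact mul_le_mul_of_nonneg_left hst1 hc
    calc a * |K|^(2*M) * |(kk K / K)^(2*M+1) - 1|
        ≤ a * |K|^(2*M) * (((2*M:ℕ)+1) * 2^(2*M) * (C1 * |K|^(2*M))) := by
          have hc : (0:ℝ) ≤ a * |K|^(2*M) := by positivity
          exact mul_le_mul_of_nonneg_left h1 hc
      _ = a*(2*(M:ℝ)+1)*2^(2*M)*C1 * (|K|^(2*M) * |K|^(2*M)) := by push_cast; ring
      _ ≤ a*(2*(M:ℝ)+1)*2^(2*M)*C1 * |K|^(2*M+2) := by
          have h2 : |K|^(2*M) * |K|^(2*M) = |K|^(2*M+2*M) := by rw [pow_add]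
          have h3 : |K|^(2*M+2*M) ≤ |K|^(2*M+2) :=
            pow_le_pow_of_le_one (abs_nonneg K) hK1 (by omega)
          have hc : (0:ℝ) ≤ a*(2*(M:ℝ)+1)*2^(2*M)*C1 := by positivity
          rw [h2]
          exact mul_le_mul_of_nonneg_left h3 hc
  -- put it together
  rw [Real.norm_eq_abs, Real.norm_eq_abs, hcoeff, abs_pow]
  calc |kk K / K - (1 + a * K^(2*M))|
      = |2*(kk K/2 - K/2 - A * (kk K/2)^(2*M+1))/K
          + a * K^(2*M) * ((kk K / K)^(2*M+1) - 1)| := by rw [hid2]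
    _ ≤ |2*(kk K/2 - K/2 - A * (kk K/2)^(2*M+1))/K|
          + |a * K^(2*M) * ((kk K / K)^(2*M+1) - 1)| := abs_add_le _ _
    _ ≤ 2*Cg * |K|^(2*M+2) + a*(2*(M:ℝ)+1)*2^(2*M)*C1 * |K|^(2*M+2) := by linarith
    _ = (2*Cg + a*(2*(M:ℝ)+1)*2^(2*M)*C1) * |K|^(2*M+2) := by ring
end
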